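/- Let Y*, X* be random variables on a finite probability space with binary indicators Δ^Y, Δ^X, and set Δ := Δ^Y·Δ^X. Assume P(Δ=1 | Y*=y, X*=x) > 0 for all (y,x) in the support. Then for every x with P(Δ^X=1, X*=x) > 0, E[Y* | X*=x] = E[ Δ^Y · Y* · P(Δ^X=1 | X*=x) / P(Δ=1 | Y*, X*=x) | Δ^X=1, X*=x ]. -/

import Mathlib

open scoped BigOperators
attribute [local instance] Classical.propDecidable

/-- Probability of an event under weight function `p` on a finite space. -/
noncomputable def Pr {Ω : Type*} [Fintype Ω] (p : Ω → ℝ) (A : Set Ω) : ℝ :=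
  ∑ ω, if ω ∈ A then p ω else 0

/-- Conditional probability of `A` given `B`. -/
noncomputable def condPr {Ω : Type*} [Fintype Ω] (p : Ω → ℝ) (A B : Set Ω) : ℝ :=
  Pr p (A ∩ B) / Pr p B

/-- Conditional expectation of `f` given event `B`. -/
noncomputable def condE {Ω : Type*} [Fintype Ω] (p : Ω → ℝ) (f : Ω → ℝ) (B : Set Ω) : ℝ :=
  (∑ ω, if ω ∈ B then p ω * f ω else 0) / Pr p B

/-- Expectation of `f`. -/
noncomputable def Ex {Ω : Type*} [Fintype Ω] (p : Ω → ℝ) (f : Ω → ℝ) : ℝ :=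
  ∑ ω, p ω * f ω

/-- jointly selectively missing outcome and covariate:
`E[Y*|X*=x] = E[Δ^Y·Y*·P(Δ^X=1|X*=x)/P(Δ=1|Y*,X*=x) | Δ^X=1, X*=x]`. -/
theorem stmt12 {Ω β : Type*} [Fintype Ω]
    (p : Ω → ℝ) (hp : ∀ ω, 0 ≤ p ω) (hsum : ∑ ω, p ω = 1)
    (Ystar : Ω → ℝ) (X : Ω → β) (DY DX : Ω → Bool)
    (hpos : ∀ ω, 0 < p ω →
      0 < condPr p {ω' | DY ω' = true ∧ DX ω' = true}
            {ω' | Ystar ω' = Ystar ω ∧ X ω' = X ω}) :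
    ∀ x, 0 < Pr p {ω' | DX ω' = true ∧ X ω' = x} →
      condE p Ystar {ω' | X ω' = x}
        = condE p (fun ω' => (if DY ω' then Ystar ω' else 0)
            * condPr p {a | DX a = true} {a | X a = x}
            / condPr p {a | DY a = true ∧ DX a = true}
                {a | Ystar a = Ystar ω' ∧ X a = x})
          {ω' | DX ω' = true ∧ X ω' = x} := by
  intro x hCpos
  have hB : (0:ℝ) < Pr p {ω' | X ω' = x} := by
    refine lt_of_lt_of_le hCpos ?_
    unfold Pr
    apply Finset.sum_le_sum
    intro ω _
    simp only [Set.mem_setOf_eq]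
    by_cases h : DX ω = true ∧ X ω = x
    · rw [if_pos h, if_pos h.2]
    · rw [if_neg h]
      split_ifs
      · exact hp ω
      · exact le_refl 0
  set Dv : ℝ → ℝ :=
    fun y => Pr p {a | (DY a = true ∧ DX a = true) ∧ (Ystar a = y ∧ X a = x)} with hDv
  set Pv : ℝ → ℝ := fun y => Pr p {a | Ystar a = y ∧ X a = x} with hPv
  have hc1 : condPr p {a | DX a = true} {a | X a = x}
      = Pr p {ω' | DX ω' = true ∧ X ω' = x} / Pr p {ω' | X ω' = x} := rfl
  have hc2 : ∀ y, condPr p {a | DY a = true ∧ DX a = true} {a | Ystar a = y ∧ X a = x}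
      = Dv y / Pv y := fun y => rfl
  set t : Ω → Ω → ℝ := fun ω ω' =>
    if (DY ω = true ∧ DX ω = true ∧ X ω = x ∧ Ystar ω' = Ystar ω ∧ X ω' = x)
    then (p ω * Ystar ω / Dv (Ystar ω)) * p ω' else 0 with ht
  have step1 : ∀ ω,
      (if DX ω = true ∧ X ω = x then
        p ω * ((if DY ω = true then Ystar ω else 0)
          * condPr p {a | DX a = true} {a | X a = x}
          / condPr p {a | DY a = true ∧ DX a = true} {a | Ystar a = Ystar ω ∧ X a = x})
       else 0)
      = (Pr p {ω' | DX ω' = true ∧ X ω' = x} / Pr p {ω' | X ω' = x}) * ∑ ω', t ω ω' := by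
    intro ω
    by_cases hωC : DX ω = true ∧ X ω = x
    · rw [if_pos hωC]
      by_cases hDY : DY ω = true
      · rw [if_pos hDY, hc1, hc2]
        have hsum' : ∑ ω', t ω ω' = (p ω * Ystar ω / Dv (Ystar ω)) * Pv (Ystar ω) := by
          have hterm : ∀ ω', t ω ω' = (p ω * Ystar ω / Dv (Ystar ω)) *
              (if Ystar ω' = Ystar ω ∧ X ω' = x then p ω' else 0) := by
            intro ω'
            simp only [ht]
            by_cases h : Ystar ω' = Ystar ω ∧ X ω' = x
            · rw [if_pos ⟨hDY, hωC.1, hωC.2, h.1, h.2⟩, if_pos h]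
            · rw [if_neg (fun hh => h ⟨hh.2.2.2.1, hh.2.2.2.2⟩), if_neg h, mul_zero]
          rw [Finset.sum_congr rfl (fun ω' _ => hterm ω'), ← Finset.mul_sum]
          simp only [hPv, Pr, Set.mem_setOf_eq]
        rw [hsum', div_div_eq_mul_div]
        ring
      · have h0 : ∀ ω', t ω ω' = 0 := by
          intro ω'; simp only [ht]; exact if_neg (fun hh => hDY hh.1)
        rw [if_neg hDY, Finset.sum_congr rfl (fun ω' _ => h0 ω'), Finset.sum_const_zero,
          mul_zero]
        ring
    · rw [if_neg hωC]
      have h0 : ∀ ω', t ω ω' = 0 := by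
        intro ω'; simp only [ht]; exact if_neg (fun hh => hωC ⟨hh.2.1, hh.2.2.1⟩)
      rw [Finset.sum_congr rfl (fun ω' _ => h0 ω'), Finset.sum_const_zero, mul_zero]
  have step2 : ∀ ω', ∑ ω, t ω ω' =
      (if X ω' = x then p ω' * Ystar ω' else 0) := by
    intro ω'
    by_cases hx : X ω' = x
    · rw [if_pos hx]
      have key : ∀ ω, t ω ω' = (Ystar ω' / Dv (Ystar ω') * p ω') *
          (if (DY ω = true ∧ DX ω = true) ∧ (Ystar ω = Ystar ω' ∧ X ω = x)
           then p ω else 0) := by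
        intro ω
        simp only [ht]
        by_cases h : (DY ω = true ∧ DX ω = true) ∧ (Ystar ω = Ystar ω' ∧ X ω = x)
        · rw [if_pos (show DY ω = true ∧ DX ω = true ∧ X ω = x ∧ Ystar ω' = Ystar ω ∧ X ω' = x
              from ⟨h.1.1, h.1.2, h.2.2, h.2.1.symm, hx⟩), if_pos h, h.2.1]
          ring
        · rw [if_neg (fun hh => h ⟨⟨hh.1, hh.2.1⟩, hh.2.2.2.1.symm, hh.2.2.1⟩), if_neg h,
            mul_zero]
      rw [Finset.sum_congr rfl (fun ω _ => key ω), ← Finset.mul_sum]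
      have hDsum : (∑ ω, if (DY ω = true ∧ DX ω = true) ∧
          (Ystar ω = Ystar ω' ∧ X ω = x) then p ω else 0) = Dv (Ystar ω') := by
        simp only [hDv, Pr, Set.mem_setOf_eq]
      rw [hDsum]
      by_cases hD : Dv (Ystar ω') = 0
      · rw [hD]
        rcases eq_or_lt_of_le (hp ω') with hp0 | hp0
        · rw [← hp0]; ring
        · exfalso
          have hq := hpos ω' hp0
          rw [hx] at hq
          rw [hc2 (Ystar ω'), hD] at hq
          simp at hq
      · field_simp
    · rw [if_neg hx]
      refine Finset.sum_eq_zero fun ω _ => ?_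
      simp only [ht]
      exact if_neg fun hh => hx hh.2.2.2.2
  have hnum : (∑ ω, if DX ω = true ∧ X ω = x then
        p ω * ((if DY ω = true then Ystar ω else 0)
          * condPr p {a | DX a = true} {a | X a = x}
          / condPr p {a | DY a = true ∧ DX a = true} {a | Ystar a = Ystar ω ∧ X a = x})
       else 0)
      = (Pr p {ω' | DX ω' = true ∧ X ω' = x} / Pr p {ω' | X ω' = x}) *
        (∑ ω, if X ω = x then p ω * Ystar ω else 0) := by
    rw [Finset.sum_congr rfl (fun ω _ => step1 ω), ← Finset.mul_sum, Finset.sum_comm]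
    rw [Finset.sum_congr rfl (fun ω' _ => step2 ω')]
  have egoal : (∑ ω, @ite ℝ (ω ∈ ({ω' | DX ω' = true ∧ X ω' = x} : Set Ω))
        (Classical.propDecidable _)
        (p ω * ((fun ω' => (if DY ω' = true then Ystar ω' else 0)
          * condPr p {a | DX a = true} {a | X a = x}
          / condPr p {a | DY a = true ∧ DX a = true} {a | Ystar a = Ystar ω' ∧ X a = x}) ω))
        0)
      = (∑ ω, if DX ω = true ∧ X ω = x then
          p ω * ((if DY ω = true then Ystar ω else 0)
            * condPr p {a | DX a = true} {a | X a = x}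
            / condPr p {a | DY a = true ∧ DX a = true} {a | Ystar a = Ystar ω ∧ X a = x})
         else 0) :=
    Finset.sum_congr rfl fun ω _ => by
      simp only [Set.mem_setOf_eq]
  have eB : (∑ ω, @ite ℝ (ω ∈ ({ω' | X ω' = x} : Set Ω)) (Classical.propDecidable _)
        (p ω * Ystar ω) 0)
      = (∑ ω, if X ω = x then p ω * Ystar ω else 0) :=
    Finset.sum_congr rfl fun ω _ => by
      simp only [Set.mem_setOf_eq]
  unfold condE
  rw [egoal, hnum, eB]
  field_simp [hB.ne', hCpos.ne']
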